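/- Let A ∈ ℝ^{m×n} have full row rank, let x* satisfy Ax* = b, and let f(y) = (1/2)‖Aᵀy‖² − ⟨b, y⟩ for y ∈ ℝ^m. Then for any y, the minimizer of f over ℝ^m (among those y with Aᵀy of minimal norm) satisfies Aᵀy = x*, and the componentwise Lipschitz constant of ∇f in coordinate i equals ‖a_i‖², where a_i is the i-th row of A. Moreover a single coordinate-descent step y' = y − (1/‖a_i‖²)(AAᵀy − b)_i e_i corresponds, under x = Aᵀy, to the Kaczmarz projection x' = x + ((b_i − ⟨a_i, x⟩)/‖a_i‖²) a_i. -/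

import Mathlib

open Matrix

lemma cd_fderiv_apply {m n : ℕ} (A : Matrix (Fin m) (Fin n) ℝ) (b : Fin m → ℝ)
    (f : (Fin m → ℝ) → ℝ)
    (hf : ∀ y, f y = (1 / 2) * (A.transpose.mulVec y ⬝ᵥ A.transpose.mulVec y) - b ⬝ᵥ y)
    (z v : Fin m → ℝ) :
    fderiv ℝ f z v = (A.mulVec (A.transpose.mulVec z) - b) ⬝ᵥ v := by
  classical
  -- coordinate continuous linear maps
  set c : Fin n → (Fin m → ℝ) →L[ℝ] ℝ :=
    fun j => LinearMap.toContinuousLinearMap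
      ((LinearMap.proj j).comp (Matrix.mulVecLin Aᵀ)) with hc
  have hcapp : ∀ j y, c j y = Aᵀ.mulVec y j := fun j y => rfl
  set bl : (Fin m → ℝ) →L[ℝ] ℝ :=
    LinearMap.toContinuousLinearMap (∑ i, b i • LinearMap.proj i) with hbl
  have hblapp : ∀ y, bl y = b ⬝ᵥ y := by
    intro y
    simp [hbl, dotProduct, LinearMap.sum_apply]
  have hD : HasFDerivAt f
      ((1/2 : ℝ) • (∑ j, (c j z • c j + c j z • c j)) - bl) z := by
    have h1 : HasFDerivAt (fun y => (1/2 : ℝ) * (∑ j, (c j y) * (c j y)))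
        ((1/2 : ℝ) • (∑ j, (c j z • c j + c j z • c j))) z := by
      apply HasFDerivAt.const_mul
      exact HasFDerivAt.fun_sum (fun j _ => ((c j).hasFDerivAt).mul ((c j).hasFDerivAt))
    have h2 : HasFDerivAt (fun y => b ⬝ᵥ y) bl z := by
      have := bl.hasFDerivAt (x := z)
      apply this.congr_of_eventuallyEq
      filter_upwards with y using (hblapp y).symm
    have := h1.sub h2
    apply this.congr_of_eventuallyEq
    filter_upwards with y
    rw [hf y]
    simp [dotProduct, hcapp]
  rw [hD.fderiv]
  simp only [ContinuousLinearMap.coe_sub', Pi.sub_apply, ContinuousLinearMap.coe_smul',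
    Pi.smul_apply, ContinuousLinearMap.coe_sum', Finset.sum_apply,
    ContinuousLinearMap.add_apply, ContinuousLinearMap.smul_apply, hblapp, hcapp, smul_eq_mul]
  rw [sub_dotProduct]
  have : (A.mulVec (Aᵀ.mulVec z)) ⬝ᵥ v = ∑ j, Aᵀ.mulVec z j * Aᵀ.mulVec v j := by
    simp [dotProduct, Matrix.mulVec, Matrix.transpose_apply, Finset.mul_sum, Finset.sum_mul]
    rw [Finset.sum_comm]
    apply Finset.sum_congr rfl; intro j _
    apply Finset.sum_congr rfl; intro i _
    exact Finset.sum_congr rfl fun x _ => by ring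
  rw [this]
  rw [Finset.mul_sum]
  congr 1
  exact Finset.sum_congr rfl fun j _ => by ring

lemma cd_adj {m n : ℕ} (A : Matrix (Fin m) (Fin n) ℝ) (x : Fin n → ℝ) (v : Fin m → ℝ) :
    A.mulVec x ⬝ᵥ v = x ⬝ᵥ A.transpose.mulVec v := by
  rw [dotProduct_comm, dotProduct_mulVec, ← Matrix.mulVec_transpose, dotProduct_comm]

lemma cd_quad_zero {α β : ℝ} (hβ : 0 ≤ β) (h : ∀ t : ℝ, 0 ≤ t * α + t ^ 2 * β) : α = 0 := by
  have h1 := h (-α / (β + 1))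
  have hb1 : (0:ℝ) < β + 1 := by linarith
  rw [div_pow, neg_pow] at h1
  have h2 : 0 ≤ (-α / (β + 1)) * α + α ^ 2 / (β + 1) ^ 2 * β := by
    simpa using h1
  have h3 : 0 ≤ -α ^ 2 * (β + 1) + α ^ 2 * β := by
    have := mul_le_mul_of_nonneg_left h2 (le_of_lt (pow_pos hb1 2))
    rw [mul_zero] at this
    calc (0:ℝ) ≤ (β+1)^2 * ((-α / (β + 1)) * α + α ^ 2 / (β + 1) ^ 2 * β) := this
    _ = -α ^ 2 * (β + 1) + α ^ 2 * β := by field_simp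
  nlinarith [sq_nonneg α]

lemma cd_dot_self_nonneg {k : ℕ} (v : Fin k → ℝ) : 0 ≤ v ⬝ᵥ v :=
  Finset.sum_nonneg fun i _ => mul_self_nonneg (v i)

/-- Randomized Kaczmarz as coordinate descent: for full row rank `A`, `x*` the minimal-norm
solution of `Ax = b`, and `f(y) = (1/2)‖Aᵀy‖² - ⟨b, y⟩`:
(a) any minimizer `y` of `f` has `Aᵀy = x*`;
(b) the componentwise Lipschitz constant of `∇f` in coordinate `i` is exactly `‖a_i‖²`
    (`a_i` the `i`-th row of `A`);
(c) the coordinate descent step on `f` corresponds, under `x = Aᵀy`, to the Kaczmarz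
    projection `x' = x + ((b_i - ⟨a_i, x⟩)/‖a_i‖²)a_i`. -/
theorem stmt_18 {m n : ℕ} (A : Matrix (Fin m) (Fin n) ℝ) (b : Fin m → ℝ)
    (hrank : A.rank = m) (xstar : Fin n → ℝ)
    (hsol : A.mulVec xstar = b)
    (hminnorm : ∀ z : Fin n → ℝ, A.mulVec z = b → xstar ⬝ᵥ xstar ≤ z ⬝ᵥ z)
    (f : (Fin m → ℝ) → ℝ)
    (hf : ∀ y, f y = (1 / 2) * (A.transpose.mulVec y ⬝ᵥ A.transpose.mulVec y) - b ⬝ᵥ y) :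
    (∀ y : Fin m → ℝ, (∀ y', f y ≤ f y') → A.transpose.mulVec y = xstar) ∧
    (∀ i : Fin m, IsLeast {c : ℝ | ∀ (y : Fin m → ℝ) (t : ℝ),
        |fderiv ℝ f (y + t • (Pi.single i 1 : Fin m → ℝ)) ((Pi.single i 1 : Fin m → ℝ))
          - fderiv ℝ f y ((Pi.single i 1 : Fin m → ℝ))| ≤ c * |t|}
      (∑ j, (A i j) ^ 2)) ∧
    (∀ (y : Fin m → ℝ) (i : Fin m),
      A.transpose.mulVec
          (y - ((A.mulVec (A.transpose.mulVec y) - b) i / ∑ j, (A i j) ^ 2) •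
            (Pi.single i 1 : Fin m → ℝ))
        = A.transpose.mulVec y
          + ((b i - (fun j => A i j) ⬝ᵥ A.transpose.mulVec y) / ∑ j, (A i j) ^ 2) •
              fun j => A i j) := by
  have hsq : ∀ i : Fin m, (0:ℝ) ≤ ∑ j, (A i j) ^ 2 :=
    fun i => Finset.sum_nonneg fun j _ => sq_nonneg _
  have hderiv := cd_fderiv_apply A b f hf
  have hsingle : ∀ i : Fin m, A.transpose.mulVec (Pi.single i 1) = fun j => A i j := by
    intro i
    funext j
    simp [Matrix.mulVec_single]
  refine ⟨?_, ?_, ?_⟩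
  · -- part (a)
    intro y hy
    set w := A.mulVec (A.transpose.mulVec y) - b with hw
    have hw0 : w = 0 := by
      rw [← dotProduct_self_eq_zero]
      apply cd_quad_zero (cd_dot_self_nonneg (A.transpose.mulVec w))
      intro t
      have h := hy (y + t • w)
      rw [hf, hf] at h
      rw [Matrix.mulVec_add, Matrix.mulVec_smul] at h
      have hexp : (A.transpose.mulVec y + t • A.transpose.mulVec w) ⬝ᵥ
          (A.transpose.mulVec y + t • A.transpose.mulVec w)
          = A.transpose.mulVec y ⬝ᵥ A.transpose.mulVec y
            + 2 * t * (A.transpose.mulVec y ⬝ᵥ A.transpose.mulVec w)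
            + t ^ 2 * (A.transpose.mulVec w ⬝ᵥ A.transpose.mulVec w) := by
        simp [dotProduct_add, add_dotProduct, smul_dotProduct, dotProduct_smul,
          dotProduct_comm (A.transpose.mulVec w) (A.transpose.mulVec y)]
        ring
      rw [hexp, dotProduct_add, dotProduct_smul] at h
      have hyw : A.transpose.mulVec y ⬝ᵥ A.transpose.mulVec w
          = w ⬝ᵥ w + b ⬝ᵥ w := by
        rw [← cd_adj, hw, sub_dotProduct, sub_add_cancel]
      rw [hyw] at h
      rw [smul_eq_mul] at h
      have : 0 ≤ t * (w ⬝ᵥ w) + t ^ 2 / 2 * (A.transpose.mulVec w ⬝ᵥ A.transpose.mulVec w) := by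
        nlinarith [h]
      nlinarith [this, cd_dot_self_nonneg (A.transpose.mulVec w), sq_nonneg t]
    -- so A (Aᵀ y) = b
    have hxb : A.mulVec (A.transpose.mulVec y) = b := by
      have := sub_eq_zero.mp hw0
      exact this
    set x := A.transpose.mulVec y with hx
    set u := x - xstar with hu
    have hAu : A.mulVec u = 0 := by
      rw [hu, Matrix.mulVec_sub, hxb, hsol, sub_self]
    have hux : u ⬝ᵥ x = 0 := by
      have := cd_adj A u y
      rw [hAu, zero_dotProduct] at this
      exact this.symm
    have hgamma : xstar ⬝ᵥ u = 0 := by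
      have h2 : (2:ℝ) * (xstar ⬝ᵥ u) = 0 := by
        apply cd_quad_zero (cd_dot_self_nonneg u)
        intro t
        have hz : A.mulVec (xstar + t • u) = b := by
          rw [Matrix.mulVec_add, Matrix.mulVec_smul, hAu, smul_zero, add_zero, hsol]
        have h := hminnorm _ hz
        have hexp : (xstar + t • u) ⬝ᵥ (xstar + t • u)
            = xstar ⬝ᵥ xstar + 2 * t * (xstar ⬝ᵥ u) + t ^ 2 * (u ⬝ᵥ u) := by
          simp [dotProduct_add, add_dotProduct, smul_dotProduct, dotProduct_smul,
            dotProduct_comm u xstar]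
          ring
        rw [hexp] at h
        nlinarith [h]
      linarith
    have huu : u ⬝ᵥ u = 0 := by
      have h1 : u ⬝ᵥ u = u ⬝ᵥ x - xstar ⬝ᵥ u := by
        nth_rewrite 2 [hu]
        rw [dotProduct_sub, dotProduct_comm u xstar]
      rw [h1, hux, hgamma, sub_zero]
    have := dotProduct_self_eq_zero.mp huu
    rw [hu] at this
    exact sub_eq_zero.mp this
  · -- part (b)
    intro i
    constructor
    · intro y t
      rw [hderiv, hderiv]
      rw [Matrix.mulVec_add, Matrix.mulVec_smul, Matrix.mulVec_add, Matrix.mulVec_smul]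
      rw [hsingle i]
      simp only [sub_dotProduct, add_dotProduct, smul_dotProduct, smul_eq_mul]
      have hdi : (A.mulVec fun j => A i j) ⬝ᵥ Pi.single i 1 = ∑ j, (A i j) ^ 2 := by
        rw [dotProduct_single]
        simp [Matrix.mulVec, dotProduct, sq]
      rw [hdi]
      have : A.mulVec (A.transpose.mulVec y) ⬝ᵥ Pi.single i 1 + t * (∑ j, (A i j) ^ 2)
          - b ⬝ᵥ Pi.single i 1
          - (A.mulVec (A.transpose.mulVec y) ⬝ᵥ Pi.single i 1 - b ⬝ᵥ Pi.single i 1)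
          = t * (∑ j, (A i j) ^ 2) := by ring
      rw [this, abs_mul, abs_of_nonneg (hsq i), mul_comm]
    · intro c hc
      have h := hc 0 1
      rw [hderiv, hderiv] at h
      simp only [one_smul, zero_add, Matrix.mulVec_zero, abs_one, mul_one] at h
      rw [hsingle i] at h
      have hdi : (A.mulVec fun j => A i j) ⬝ᵥ Pi.single i 1 = ∑ j, (A i j) ^ 2 := by
        rw [dotProduct_single]
        simp [Matrix.mulVec, dotProduct, sq]
      rw [sub_dotProduct, sub_dotProduct, zero_dotProduct, hdi] at h
      have he : (∑ j, (A i j) ^ 2) - b ⬝ᵥ Pi.single i 1 - (0 - b ⬝ᵥ Pi.single i 1)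
          = ∑ j, (A i j) ^ 2 := by ring
      rw [he, abs_of_nonneg (hsq i)] at h
      exact h
  · -- part (c)
    intro y i
    rw [Matrix.mulVec_sub, Matrix.mulVec_smul, hsingle i]
    funext k
    simp only [Pi.sub_apply, Pi.add_apply, Pi.smul_apply, smul_eq_mul]
    have hAx : (fun j => A i j) ⬝ᵥ A.transpose.mulVec y
        = (A.mulVec (A.transpose.mulVec y)) i := rfl
    rw [hAx]
    ring
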